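/- arXiv:1508.04812 — 3 statements merged into one kernel-verified Lean document; each statement's English description precedes it below -/
import Mathlib

section
/- Let X = (X_1,…,X_I) follow a Dirichlet(α,…,α) distribution with 0 < α < 1, truncated to the region where all coordinates exceed τ, with τ < ε² and ε < 1/I. Then for any point (x_{10},…,x_{I0}) of the I-simplex, P(Σ_{i=1}^I |X_i − x_{i0}| ≤ 2ε) ≥ (Γ(αI)/Γ(α)^I) (ε² − τ)^I. -/
set_option maxHeartbeats 1000000


open MeasureTheory Finset

/-- Let `(X₁,…,X_I)` follow a Dirichlet(α,…,α) distribution (`0 < α < 1`)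
truncated to `{∀ i, X i > τ}`, with `τ < ε²` and `ε < 1/I`.  The distribution is
represented through its first `I-1` coordinates `y`, the last coordinate being
`1 - ∑ y`; the truncation makes the normalizing constant at least
`Γ(αI)/Γ(α)^I` times the unnormalized density `∏ yᵢ^{α-1}`.  Then for any point
`x₀` of the `I`-simplex,
`P(∑ᵢ |Xᵢ - x₀ᵢ| ≤ 2ε) ≥ (Γ(αI)/Γ(α)^I) (ε² - τ)^I`. -/
theorem truncated_dirichlet_ball_mass
    (m : ℕ) (hm : 1 ≤ m) (α τ ε : ℝ) (hα : 0 < α) (hα1 : α < 1)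
    (hτ0 : 0 ≤ τ) (hτ : τ < ε ^ 2) (hε : 0 < ε) (hεI : ε < 1 / ((m : ℝ) + 1))
    (x₀ : Fin (m + 1) → ℝ) (hx₀ : ∀ i, 0 ≤ x₀ i) (hsum₀ : ∑ i, x₀ i = 1)
    (P : Measure (Fin m → ℝ)) [IsProbabilityMeasure P]
    (hP : ∀ A : Set (Fin m → ℝ), MeasurableSet A →
      ENNReal.ofReal
        (Real.Gamma (α * ((m : ℝ) + 1)) / (Real.Gamma α) ^ (m + 1) *
          ∫ y in A ∩ {y : Fin m → ℝ | (∀ i, τ < y i) ∧ τ < 1 - ∑ i, y i},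
            (∏ i, (y i) ^ (α - 1)) * (1 - ∑ i, y i) ^ (α - 1))
        ≤ P A) :
    ENNReal.ofReal
        (Real.Gamma (α * ((m : ℝ) + 1)) / (Real.Gamma α) ^ (m + 1) *
          (ε ^ 2 - τ) ^ (m + 1))
      ≤ P {y : Fin m → ℝ |
            (∑ i : Fin m, |y i - x₀ i.castSucc|) +
              |(1 - ∑ i, y i) - x₀ (Fin.last m)| ≤ 2 * ε} := by
  have hm1 : (1:ℝ) ≤ (m:ℝ) := by exact_mod_cast hm
  have hmpos : (0:ℝ) < (m:ℝ) + 1 := by linarith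
  have hεm : ε * ((m:ℝ) + 1) < 1 := (lt_div_iff₀ hmpos).mp hεI
  have hε1 : ε < 1 := by nlinarith
  set δ : ℝ := ε ^ 2 - τ with hδdef
  have hδ0 : 0 < δ := by simp only [hδdef]; linarith
  have hδ1 : δ < 1 := by nlinarith
  set θ : ℝ := ((m:ℝ) + 1) * ε ^ 2 with hθdef
  have hθ0 : 0 < θ := by positivity
  have hθε : θ ≤ ε := by nlinarith
  have hθ1 : θ < 1 := lt_of_le_of_lt hθε hε1
  set η : ℝ := δ ^ 2 / (2 * m) with hηdef
  have hη0 : 0 < η := by positivity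
  have hηδ : η < δ := by
    rw [hηdef, div_lt_iff₀ (by positivity)]
    nlinarith
  set c : Fin m → ℝ := fun i => max ((1 - θ) * x₀ i.castSucc) τ with hcdef
  have hc_ge : ∀ i, τ ≤ c i := fun i => le_max_right _ _
  have hc_lb : ∀ i, (1 - θ) * x₀ i.castSucc ≤ c i := fun i => le_max_left _ _
  have hc_le : ∀ i, c i ≤ (1 - θ) * x₀ i.castSucc + τ := fun i =>
    max_le (le_add_of_nonneg_right hτ0)
      (le_add_of_nonneg_left (mul_nonneg (by linarith) (hx₀ _)))
  set K : Set (Fin m → ℝ) := Set.univ.pi fun i => Set.Icc (c i + η) (c i + δ) with hKdef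
  have hKmeas : MeasurableSet K := MeasurableSet.univ_pi fun i => measurableSet_Icc
  have hKcomp : IsCompact K := isCompact_univ_pi fun i => isCompact_Icc
  have hfirst : ∑ i : Fin m, x₀ i.castSucc = 1 - x₀ (Fin.last m) := by
    have := Fin.sum_univ_castSucc (fun i => x₀ i)
    rw [hsum₀] at this
    linarith
  have hx₀first : ∀ i : Fin m, 0 ≤ x₀ i.castSucc := fun i => hx₀ _
  -- coordinates of points of K
  have hKmem : ∀ y ∈ K, ∀ i, c i + η ≤ y i ∧ y i ≤ c i + δ := by
    intro y hy i
    exact (hy i (Set.mem_univ i) : y i ∈ Set.Icc _ _)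
  -- sum bound on K
  have hsumK : ∀ y ∈ K, (1 - θ) * x₀ (Fin.last m) + ε ^ 2 ≤ 1 - ∑ i, y i := by
    intro y hy
    have h1 : ∑ i, y i ≤ ∑ i : Fin m, ((1 - θ) * x₀ i.castSucc + τ + δ) :=
      Finset.sum_le_sum fun i _ => by
        have h2 := (hKmem y hy i).2
        have h3 := hc_le i
        linarith
    have h2 : ∑ i : Fin m, ((1 - θ) * x₀ i.castSucc + τ + δ)
        = (1 - θ) * (1 - x₀ (Fin.last m)) + (m : ℝ) * (τ + δ) := by
      rw [Finset.sum_add_distrib, Finset.sum_add_distrib, ← Finset.mul_sum, hfirst,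
        Finset.sum_const, Finset.sum_const, Finset.card_univ, Fintype.card_fin,
        nsmul_eq_mul, nsmul_eq_mul]
      ring
    have h3 : τ + δ = ε ^ 2 := by rw [hδdef]; ring
    rw [h3] at h2
    have hθm : θ = (m : ℝ) * ε ^ 2 + ε ^ 2 := by rw [hθdef]; ring
    nlinarith [hx₀ (Fin.last m)]
  -- positivity of coordinates on K
  have hKpos : ∀ y ∈ K, ∀ i, τ < y i := by
    intro y hy i
    have := (hKmem y hy i).1
    have := hc_ge i
    linarith
  -- K is contained in the truncated simplex
  have hKS : K ⊆ {y : Fin m → ℝ | (∀ i, τ < y i) ∧ τ < 1 - ∑ i, y i} := by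
    intro y hy
    refine ⟨hKpos y hy, ?_⟩
    have := hsumK y hy
    have hlast := hx₀ (Fin.last m)
    nlinarith
  -- K is contained in the ball event
  have hKE : K ⊆ {y : Fin m → ℝ |
      (∑ i : Fin m, |y i - x₀ i.castSucc|) +
        |(1 - ∑ i, y i) - x₀ (Fin.last m)| ≤ 2 * ε} := by
    intro y hy
    have habs : ∀ a b : ℝ, |a - b| = (a - b) + 2 * max (b - a) 0 := by
      intro a b
      rcases le_total a b with h | h
      · rw [abs_of_nonpos (by linarith), max_eq_left (by linarith)]; ring
      · rw [abs_of_nonneg (by linarith), max_eq_right (by linarith)]; ring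
    have hmaxi : ∀ i : Fin m, max (x₀ i.castSucc - y i) 0 ≤ θ * x₀ i.castSucc := by
      intro i
      refine max_le ?_ (mul_nonneg hθ0.le (hx₀ _))
      have h1 := (hKmem y hy i).1
      have h2 := hc_lb i
      nlinarith
    have hmaxl : max (x₀ (Fin.last m) - (1 - ∑ i, y i)) 0 ≤ θ * x₀ (Fin.last m) := by
      refine max_le ?_ (mul_nonneg hθ0.le (hx₀ _))
      have h1 := hsumK y hy
      have h2 : (1 - θ) * x₀ (Fin.last m) = x₀ (Fin.last m) - θ * x₀ (Fin.last m) := by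
        ring
      nlinarith [sq_nonneg ε]
    have hkey : (∑ i : Fin m, |y i - x₀ i.castSucc|) +
        |(1 - ∑ i, y i) - x₀ (Fin.last m)|
        = 2 * ((∑ i : Fin m, max (x₀ i.castSucc - y i) 0) +
            max (x₀ (Fin.last m) - (1 - ∑ i, y i)) 0) := by
      have hzero : (∑ i : Fin m, (y i - x₀ i.castSucc))
          + ((1 - ∑ i, y i) - x₀ (Fin.last m)) = 0 := by
        rw [Finset.sum_sub_distrib]
        linarith [hfirst]
      have e1 : ∑ i : Fin m, |y i - x₀ i.castSucc| =
          (∑ i : Fin m, (y i - x₀ i.castSucc)) +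
            2 * ∑ i : Fin m, max (x₀ i.castSucc - y i) 0 := by
        rw [Finset.mul_sum, ← Finset.sum_add_distrib]
        exact Finset.sum_congr rfl fun i _ => habs _ _
      rw [e1, habs (1 - ∑ i, y i) (x₀ (Fin.last m))]
      linarith [hzero]
    rw [Set.mem_setOf_eq, hkey]
    have hsum_max : ∑ i : Fin m, max (x₀ i.castSucc - y i) 0
        ≤ θ * (1 - x₀ (Fin.last m)) := by
      calc ∑ i : Fin m, max (x₀ i.castSucc - y i) 0
          ≤ ∑ i : Fin m, θ * x₀ i.castSucc := Finset.sum_le_sum fun i _ => hmaxi i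
        _ = θ * (1 - x₀ (Fin.last m)) := by rw [← Finset.mul_sum, hfirst]
    have : (∑ i : Fin m, max (x₀ i.castSucc - y i) 0) +
        max (x₀ (Fin.last m) - (1 - ∑ i, y i)) 0 ≤ θ := by
      have := hmaxl
      nlinarith [hsum_max]
    linarith
  -- the integrand is at least 1 on K
  have hf_ge : ∀ y ∈ K,
      (1:ℝ) ≤ (∏ i, (y i) ^ (α - 1)) * (1 - ∑ i, y i) ^ (α - 1) := by
    intro y hy
    have hpos : ∀ i, 0 < y i := fun i => lt_of_le_of_lt hτ0 (hKpos y hy i)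
    have hsum : ε ^ 2 ≤ 1 - ∑ i, y i := by
      have := hsumK y hy
      nlinarith [hx₀ (Fin.last m)]
    have hy1 : ∀ i, y i ≤ 1 := by
      intro i
      have h1 : y i ≤ ∑ j, y j :=
        Finset.single_le_sum (fun j _ => (hpos j).le) (Finset.mem_univ i)
      nlinarith [sq_nonneg ε]
    have hterm : ∀ i, (1:ℝ) ≤ (y i) ^ (α - 1) := by
      intro i
      have := Real.rpow_le_rpow_of_exponent_ge (hpos i) (hy1 i)
        (show α - 1 ≤ 0 by linarith)
      rwa [Real.rpow_zero] at this
    have hlast : (1:ℝ) ≤ (1 - ∑ i, y i) ^ (α - 1) := by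
      have hp : 0 < 1 - ∑ i, y i := lt_of_lt_of_le (by positivity) hsum
      have hle1 : 1 - ∑ i, y i ≤ 1 := by
        have : 0 ≤ ∑ i, y i := Finset.sum_nonneg fun i _ => (hpos i).le
        linarith
      have := Real.rpow_le_rpow_of_exponent_ge hp hle1 (show α - 1 ≤ 0 by linarith)
      rwa [Real.rpow_zero] at this
    have hprod : (1:ℝ) ≤ ∏ i, (y i) ^ (α - 1) := by
      calc (1:ℝ) = ∏ _i : Fin m, (1:ℝ) := by simp
        _ ≤ ∏ i, (y i) ^ (α - 1) :=
          Finset.prod_le_prod (fun i _ => by norm_num) (fun i _ => hterm i)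
    nlinarith
  -- integrability on K
  have hint : IntegrableOn
      (fun y : Fin m → ℝ => (∏ i, (y i) ^ (α - 1)) * (1 - ∑ i, y i) ^ (α - 1)) K := by
    apply ContinuousOn.integrableOn_compact hKcomp
    apply ContinuousOn.mul
    · apply continuousOn_finset_prod
      intro i _
      exact ((continuous_apply i).continuousOn).rpow_const fun y hy =>
        Or.inl (ne_of_gt (lt_of_le_of_lt hτ0 (hKpos y hy i)))
    · apply ContinuousOn.rpow_const
      · exact (continuous_const.sub (continuous_finset_sum _ fun i _ =>
          continuous_apply i)).continuousOn
      · intro y hy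
        left
        have := hsumK y hy
        have := hx₀ (Fin.last m)
        nlinarith [sq_nonneg ε]
  -- volume of K
  have hvol : volume K = ENNReal.ofReal ((δ - η) ^ m) := by
    rw [hKdef, volume_pi_pi]
    simp only [Real.volume_Icc, add_sub_add_left_eq_sub]
    rw [Finset.prod_const, Finset.card_univ, Fintype.card_fin,
      ← ENNReal.ofReal_pow (by linarith)]
  -- lower bound for the integral
  have hvolK_ne : volume K ≠ ⊤ := hKcomp.measure_lt_top.ne
  have hintlb : δ ^ (m + 1) ≤
      ∫ y in K, (∏ i, (y i) ^ (α - 1)) * (1 - ∑ i, y i) ^ (α - 1) := by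
    have h1 : (1:ℝ) * (volume K).toReal ≤
        ∫ y in K, (∏ i, (y i) ^ (α - 1)) * (1 - ∑ i, y i) ^ (α - 1) :=
      setIntegral_ge_of_const_le_real hKmeas hvolK_ne hf_ge hint
    have h2 : (volume K).toReal = (δ - η) ^ m := by
      rw [hvol, ENNReal.toReal_ofReal (pow_nonneg (by linarith) m)]
    have h3 : δ ^ (m + 1) ≤ (δ - η) ^ m := by
      have hfac : δ - η = δ * (1 - δ / (2 * m)) := by
        rw [hηdef]; field_simp
      have hbern : 1 + (m:ℝ) * (-(δ / (2 * m))) ≤ (1 + (-(δ / (2 * m)))) ^ m := by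
        apply one_add_mul_le_pow
        have : δ / (2 * m) ≤ 1 := by
          rw [div_le_one (by positivity)]; nlinarith
        linarith
      have hsimp : 1 + (m:ℝ) * (-(δ / (2 * m))) = 1 - δ / 2 := by
        field_simp
        ring
      have hδhalf : δ ≤ 1 - δ / 2 := by
        have : δ < 1 / 2 := by nlinarith
        linarith
      calc δ ^ (m + 1) = δ ^ m * δ := by ring
        _ ≤ δ ^ m * (1 - δ / (2 * m)) ^ m := by
            apply mul_le_mul_of_nonneg_left _ (by positivity)
            calc δ ≤ 1 - δ / 2 := hδhalf
              _ = 1 + (m:ℝ) * (-(δ / (2 * m))) := hsimp.symm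
              _ ≤ (1 + (-(δ / (2 * m)))) ^ m := hbern
              _ = (1 - δ / (2 * m)) ^ m := by ring_nf
        _ = (δ * (1 - δ / (2 * m))) ^ m := (mul_pow _ _ _).symm
        _ = (δ - η) ^ m := by rw [← hfac]
    calc δ ^ (m + 1) ≤ (δ - η) ^ m := h3
      _ = (1:ℝ) * (volume K).toReal := by rw [h2, one_mul]
      _ ≤ _ := h1
  -- put everything together
  have hC : 0 < Real.Gamma (α * ((m : ℝ) + 1)) / (Real.Gamma α) ^ (m + 1) := by
    apply div_pos
    · exact Real.Gamma_pos_of_pos (by positivity)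
    · exact pow_pos (Real.Gamma_pos_of_pos hα) _
  have hPK := hP K hKmeas
  have hKS' : K ∩ {y : Fin m → ℝ | (∀ i, τ < y i) ∧ τ < 1 - ∑ i, y i} = K :=
    Set.inter_eq_self_of_subset_left hKS
  rw [hKS'] at hPK
  calc ENNReal.ofReal
        (Real.Gamma (α * ((m : ℝ) + 1)) / (Real.Gamma α) ^ (m + 1) * δ ^ (m + 1))
      ≤ ENNReal.ofReal
        (Real.Gamma (α * ((m : ℝ) + 1)) / (Real.Gamma α) ^ (m + 1) *
          ∫ y in K, (∏ i, (y i) ^ (α - 1)) * (1 - ∑ i, y i) ^ (α - 1)) := by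
        apply ENNReal.ofReal_le_ofReal
        exact mul_le_mul_of_nonneg_left hintlb hC.le
    _ ≤ P K := hPK
    _ ≤ P _ := measure_mono hKE
end

section
/- Let f, f₀ be density functions with squared Hellinger distance ρ²(f,f₀) ≤ ε², and suppose M_δ² = ∫_{{f₀/f ≥ e^{1/δ}}} f₀ (f₀/f)^δ < ∞ for some δ ∈ (0,1]. Then for all ε² ≤ (1/2)(1 − e^{−1})², the Kullback–Leibler divergence satisfies ∫ f₀ log(f₀/f) ≤ [6 + 2 log 2/(1−e^{−1})² + (8/δ) max(1, log(M_δ/ε))] ε². -/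
open MeasureTheory

lemma aux_log (κ s : ℝ) (hκ : 2 ≤ κ) (hs : 0 < s)
    (h : Real.exp (-(κ/2)) ≤ s) : s - 1 - Real.log s ≤ κ * (1 - s)^2 := by
  have hinv : -Real.log s ≤ s⁻¹ - 1 := by
    have := Real.log_le_sub_one_of_pos (inv_pos.mpr hs)
    rwa [Real.log_inv] at this
  have key : s * (-Real.log s) ≤ 1 - s := by
    have h1 := mul_le_mul_of_nonneg_left hinv hs.le
    have h2 : s * s⁻¹ = 1 := mul_inv_cancel₀ hs.ne'
    nlinarith
  rcases le_or_gt (1/2) s with hs2 | hs2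
  · have hks : 1 ≤ κ * s := by nlinarith
    nlinarith [key, mul_nonneg (sub_nonneg.mpr hks) (sq_nonneg (1 - s)), hs]
  · have hs1 : s < 1 := by linarith
    have hlneg : Real.log s < 0 := Real.log_neg hs hs1
    have hLκ : -Real.log s ≤ κ/2 := by
      have h2 : -(κ/2) ≤ Real.log s := (Real.le_log_iff_exp_le hs).mpr h
      linarith
    have hmain : s - 1 + (-Real.log s) ≤ 2*(-Real.log s)*(1-s)^2 := by
      rcases le_or_gt 1 (2*(1-s)^2) with hc1 | hc1
      · nlinarith [mul_nonneg (by linarith : (0:ℝ) ≤ -Real.log s) (sub_nonneg.mpr hc1)]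
      · nlinarith [mul_le_mul_of_nonneg_right key (by linarith : (0:ℝ) ≤ 1 - 2*(1-s)^2),
          sq_nonneg (1-s), mul_pos hs (by linarith : (0:ℝ) < -Real.log s), hs, hs2]
    nlinarith [sq_nonneg (1-s), hmain, hLκ]

set_option maxHeartbeats 2000000 in
/-- Wong–Shen, Theorem 5, first bound: if `ρ²(f, f₀) ≤ ε²`,
`M_δ² = ∫_{f₀/f ≥ e^{1/δ}} f₀ (f₀/f)^δ < ∞` for some `δ ∈ (0,1]`, and
`ε² ≤ (1/2)(1-e⁻¹)²`, then
`∫ f₀ log(f₀/f) ≤ [6 + 2log2/(1-e⁻¹)² + (8/δ) max(1, log(M_δ/ε))] ε²`. -/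
theorem kl_le_hellinger_bound
    {Ω : Type*} [MeasurableSpace Ω] (μ : Measure Ω)
    (f f₀ : Ω → ℝ) (hfm : Measurable f) (hf₀m : Measurable f₀)
    (hf0 : ∀ x, 0 ≤ f x) (hf₀0 : ∀ x, 0 ≤ f₀ x)
    (hf : ∫ x, f x ∂μ = 1) (hf₀ : ∫ x, f₀ x ∂μ = 1)
    (ε δ Mδ : ℝ) (hε : 0 < ε) (hδ : 0 < δ) (hδ1 : δ ≤ 1) (hMδ : 0 < Mδ)
    (hhell : ∫ x, (Real.sqrt (f x) - Real.sqrt (f₀ x))^2 ∂μ ≤ ε ^ 2)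
    (hMδdef : Mδ ^ 2
      = ∫ x in {x | Real.exp (1 / δ) ≤ f₀ x / f x}, f₀ x * (f₀ x / f x) ^ δ ∂μ)
    (hfin : IntegrableOn (fun x => f₀ x * (f₀ x / f x) ^ δ)
      {x | Real.exp (1 / δ) ≤ f₀ x / f x} μ)
    (hεsmall : ε ^ 2 ≤ (1 / 2) * (1 - Real.exp (-1)) ^ 2) :
    ∫ x, f₀ x * Real.log (f₀ x / f x) ∂μ
      ≤ (6 + 2 * Real.log 2 / (1 - Real.exp (-1)) ^ 2
          + (8 / δ) * max 1 (Real.log (Mδ / ε))) * ε ^ 2 := by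
  classical
  set c : ℝ := 1 - Real.exp (-1) with hc_def
  set M : ℝ := max 1 (Real.log (Mδ / ε)) with hM_def
  -- numeric facts
  have hexp1 : (2.7:ℝ) < Real.exp 1 := by
    have := Real.exp_one_gt_d9; norm_num at this ⊢; linarith
  have hei : Real.exp (-1) < 10/27 := by
    rw [Real.exp_neg]
    calc (Real.exp 1)⁻¹ < (2.7:ℝ)⁻¹ := by
          apply inv_strictAnti₀ (by norm_num) hexp1
      _ ≤ 10/27 := by norm_num
  have hepos : (0:ℝ) < Real.exp (-1) := Real.exp_pos _
  have hcpos : (17:ℝ)/27 < c := by rw [hc_def]; linarith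
  have hc0 : (0:ℝ) < c := by linarith
  have hM1 : (1:ℝ) ≤ M := le_max_left _ _
  have hε2 : (0:ℝ) < ε^2 := by positivity
  have hlog2 : (0:ℝ) ≤ Real.log 2 := Real.log_nonneg (by norm_num)
  have hc2 : (0:ℝ) ≤ 2 * Real.log 2 / c ^ 2 := by positivity
  have h8δ : (0:ℝ) ≤ 8 / δ * M := mul_nonneg (by positivity) (by linarith)
  -- trivial case: KL integrand not integrable
  by_cases hK : Integrable (fun x => f₀ x * Real.log (f₀ x / f x)) μ
  swap
  · rw [integral_undef hK]
    have h9 : (0:ℝ) ≤ 6 + 2 * Real.log 2 / c ^ 2 + 8 / δ * M := by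
      linarith only [hc2, h8δ]
    exact mul_nonneg h9 hε2.le
  -- basic integrability
  have hf_int : Integrable f μ := by
    by_contra h; rw [integral_undef h] at hf; norm_num at hf
  have hf₀_int : Integrable f₀ μ := by
    by_contra h; rw [integral_undef h] at hf₀; norm_num at hf₀
  have msqrtf : Measurable fun x => Real.sqrt (f x) :=
    Real.continuous_sqrt.measurable.comp hfm
  have msqrtf₀ : Measurable fun x => Real.sqrt (f₀ x) :=
    Real.continuous_sqrt.measurable.comp hf₀m
  have int_sqrtmul : Integrable (fun x => Real.sqrt (f x) * Real.sqrt (f₀ x)) μ := by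
    apply Integrable.mono (hf_int.add hf₀_int) (msqrtf.mul msqrtf₀).aestronglyMeasurable
    filter_upwards with x
    simp only [Pi.add_apply, Pi.mul_apply]
    have h1 := Real.sq_sqrt (hf0 x)
    have h2 := Real.sq_sqrt (hf₀0 x)
    have h3 : 0 ≤ Real.sqrt (f x) * Real.sqrt (f₀ x) :=
      mul_nonneg (Real.sqrt_nonneg _) (Real.sqrt_nonneg _)
    rw [Real.norm_eq_abs, Real.norm_eq_abs, abs_of_nonneg h3,
      abs_of_nonneg (by linarith [hf0 x, hf₀0 x] : (0:ℝ) ≤ f x + f₀ x)]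
    nlinarith [sq_nonneg (Real.sqrt (f x) - Real.sqrt (f₀ x))]
  have sq_expand : ∀ x, (Real.sqrt (f₀ x) - Real.sqrt (f x))^2
      = f₀ x + f x - 2*(Real.sqrt (f x) * Real.sqrt (f₀ x)) := by
    intro x
    have h1 := Real.sq_sqrt (hf0 x)
    have h2 := Real.sq_sqrt (hf₀0 x)
    rw [sub_sq]; nlinarith []
  have int_sq : Integrable (fun x => (Real.sqrt (f₀ x) - Real.sqrt (f x))^2) μ := by
    have heq : (fun x => (Real.sqrt (f₀ x) - Real.sqrt (f x))^2)
        = fun x => f₀ x + f x - 2*(Real.sqrt (f x) * Real.sqrt (f₀ x)) := funext sq_expand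
    rw [heq]
    exact (hf₀_int.add hf_int).sub (int_sqrtmul.const_mul 2)
  set H : ℝ := ∫ x, Real.sqrt (f x) * Real.sqrt (f₀ x) ∂μ with hH_def
  set S : ℝ := ∫ x, (Real.sqrt (f₀ x) - Real.sqrt (f x))^2 ∂μ with hS_def
  have hS2H : S = 2 - 2*H := by
    rw [hS_def, integral_congr_ae (Filter.Eventually.of_forall sq_expand)]
    have i1 : Integrable (fun x => f₀ x + f x) μ := hf₀_int.add hf_int
    have i2 : Integrable (fun x => 2*(Real.sqrt (f x) * Real.sqrt (f₀ x))) μ :=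
      int_sqrtmul.const_mul 2
    rw [integral_sub i1 i2, integral_add hf₀_int hf_int, integral_const_mul, hf, hf₀, hH_def]
    ring
  have hS_nonneg : 0 ≤ S := by
    rw [hS_def]; exact integral_nonneg fun x => sq_nonneg _
  have hS_le : S ≤ ε^2 := by
    have heq : S = ∫ x, (Real.sqrt (f x) - Real.sqrt (f₀ x))^2 ∂μ := by
      rw [hS_def]
      exact integral_congr_ae (Filter.Eventually.of_forall fun x => by ring)
    rw [heq]; exact hhell
  -- the splitting threshold
  set lam : ℝ := 2 + 1/δ with hlam_def
  have hlam2 : (2:ℝ) ≤ lam := by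
    have : (0:ℝ) < 1/δ := by positivity
    rw [hlam_def]; linarith
  set A : Set Ω := {x | Real.exp lam ≤ f₀ x / f x} with hA_def
  have hAmeas : MeasurableSet A := measurableSet_le measurable_const (hf₀m.div hfm)
  have hsubset : A ⊆ {x | Real.exp (1 / δ) ≤ f₀ x / f x} := by
    intro x hx
    simp only [hA_def, Set.mem_setOf_eq] at hx ⊢
    refine le_trans (Real.exp_le_exp.mpr ?_) hx
    rw [hlam_def]; linarith
  -- positivity on A
  have hApos : ∀ x ∈ A, 0 < f x ∧ 0 < f₀ x := by
    intro x hx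
    simp only [hA_def, Set.mem_setOf_eq] at hx
    have hfx : 0 < f x := by
      rcases (hf0 x).lt_or_eq with h | h
      · exact h
      · exfalso; rw [← h, div_zero] at hx; exact absurd hx (not_le.mpr (Real.exp_pos lam))
    have hratio : 0 < f₀ x / f x := lt_of_lt_of_le (Real.exp_pos lam) hx
    have hf₀x : 0 < f₀ x := by
      rcases div_pos_iff.mp hratio with ⟨h1, _⟩ | ⟨_, h2⟩
      · exact h1
      · linarith
    exact ⟨hfx, hf₀x⟩
  -- √(f x)/√(f₀ x) facts on A
  have hsA : ∀ x ∈ A, Real.sqrt (f x) ≤ Real.exp (-1) * Real.sqrt (f₀ x) := by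
    intro x hx
    obtain ⟨hfx, hf₀x⟩ := hApos x hx
    simp only [hA_def, Set.mem_setOf_eq] at hx
    have hr : f x / f₀ x ≤ Real.exp (-lam) := by
      have h1 : f x / f₀ x = (f₀ x / f x)⁻¹ := by rw [inv_div]
      rw [h1, Real.exp_neg]
      exact inv_anti₀ (Real.exp_pos lam) hx
    have hexplam : Real.exp (-lam) ≤ Real.exp (-1) * Real.exp (-1) := by
      rw [← Real.exp_add]
      apply Real.exp_le_exp.mpr; linarith only [hlam2]
    have hsq : Real.sqrt (f x) ^ 2 ≤ (Real.exp (-1) * Real.sqrt (f₀ x)) ^ 2 := by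
      rw [Real.sq_sqrt (hf0 x), mul_pow, Real.sq_sqrt (hf₀0 x)]
      have h2 : f x ≤ Real.exp (-lam) * f₀ x := by
        rw [div_le_iff₀ hf₀x] at hr; linarith
      calc f x ≤ Real.exp (-lam) * f₀ x := h2
        _ ≤ (Real.exp (-1) * Real.exp (-1)) * f₀ x := by
            apply mul_le_mul_of_nonneg_right hexplam (hf₀0 x)
        _ = Real.exp (-1) ^ 2 * f₀ x := by ring
    exact (abs_le_of_sq_le_sq' hsq (by positivity)).2
  -- the auxiliary comparison function φ
  set φ : Ω → ℝ := fun x => 2*(f₀ x - Real.sqrt (f x) * Real.sqrt (f₀ x))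
      + 2*lam*(Real.sqrt (f₀ x) - Real.sqrt (f x))^2 with hφ_def
  have hφ_int : Integrable φ μ := by
    rw [hφ_def]
    exact ((hf₀_int.sub int_sqrtmul).const_mul 2).add (int_sq.const_mul (2*lam))
  have hφ_integral : ∫ x, φ x ∂μ = (1 + 2*lam) * S := by
    rw [hφ_def]
    have i1 : Integrable (fun x => 2*(f₀ x - Real.sqrt (f x) * Real.sqrt (f₀ x))) μ :=
      (hf₀_int.sub int_sqrtmul).const_mul 2
    have i2 : Integrable (fun x => 2*lam*(Real.sqrt (f₀ x) - Real.sqrt (f x))^2) μ :=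
      int_sq.const_mul (2*lam)
    rw [integral_add i1 i2, integral_const_mul, integral_const_mul,
      integral_sub hf₀_int int_sqrtmul, hf₀, ← hH_def, ← hS_def]
    linear_combination (-1 : ℝ) * hS2H
  -- pointwise bound on the complement of A
  have hBpt : ∀ x ∈ Aᶜ, f₀ x * Real.log (f₀ x / f x) ≤ φ x := by
    intro x hx
    simp only [hA_def, Set.mem_compl_iff, Set.mem_setOf_eq, not_le] at hx
    simp only [hφ_def]
    rcases (hf₀0 x).eq_or_lt with h0 | hf₀x
    · rw [← h0, zero_mul, Real.sqrt_zero]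
      nlinarith only [mul_nonneg (by linarith only [hlam2] : (0:ℝ) ≤ 2*lam)
        (sq_nonneg (0 - Real.sqrt (f x)))]
    rcases (hf0 x).eq_or_lt with hq0 | hfx
    · rw [← hq0, div_zero, Real.log_zero, mul_zero, Real.sqrt_zero]
      nlinarith only [hf₀x, Real.sq_sqrt (hf₀0 x),
        mul_nonneg (by linarith only [hlam2] : (0:ℝ) ≤ 2*lam)
          (sq_nonneg (Real.sqrt (f₀ x) - 0))]
    · set a := Real.sqrt (f x) with ha_def
      set b := Real.sqrt (f₀ x) with hb_def
      have hapos : 0 < a := Real.sqrt_pos.mpr hfx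
      have hbpos : 0 < b := Real.sqrt_pos.mpr hf₀x
      have ha2 : a^2 = f x := Real.sq_sqrt (hf0 x)
      have hb2 : b^2 = f₀ x := Real.sq_sqrt (hf₀0 x)
      set s := a / b with hs_def
      have hs0 : 0 < s := div_pos hapos hbpos
      have hss : s^2 = f x / f₀ x := by rw [hs_def, div_pow, ha2, hb2]
      have hrpos : 0 < f₀ x / f x := div_pos hf₀x hfx
      have hslb : Real.exp (-(lam/2)) ≤ s := by
        by_contra hcon
        push_neg at hcon
        have h1 : s^2 < (Real.exp (-(lam/2)))^2 :=
          pow_lt_pow_left₀ hcon hs0.le two_ne_zero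
        have h2 : (Real.exp (-(lam/2)))^2 = Real.exp (-lam) := by
          rw [sq, ← Real.exp_add]; ring_nf
        have h3 : Real.exp (-lam) < f x / f₀ x := by
          rw [Real.exp_neg]
          have h4 : f x / f₀ x = (f₀ x / f x)⁻¹ := by rw [inv_div]
          rw [h4]
          exact inv_strictAnti₀ hrpos hx
        rw [hss, h2] at h1
        linarith only [h1, h3]
      have hlogr : Real.log (f₀ x / f x) = -(2 * Real.log s) := by
        rw [hs_def, Real.log_div hapos.ne' hbpos.ne', Real.log_div hf₀x.ne' hfx.ne']
        have hla : Real.log (f x) = 2 * Real.log a := by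
          rw [← ha2, Real.log_pow]; push_cast; ring
        have hlb : Real.log (f₀ x) = 2 * Real.log b := by
          rw [← hb2, Real.log_pow]; push_cast; ring
        rw [hla, hlb]; ring
      have hcore : -(2*Real.log s) ≤ 2*(1-s) + 2*lam*(1-s)^2 := by
        have h7 := aux_log lam s hlam2 hs0 hslb
        linarith only [h7]
      rw [hlogr]
      calc f₀ x * -(2*Real.log s) ≤ f₀ x * (2*(1-s) + 2*lam*(1-s)^2) :=
            mul_le_mul_of_nonneg_left hcore (hf₀0 x)
        _ = 2*(f₀ x - a*b) + 2*lam*(b-a)^2 := by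
            rw [← hb2, hs_def]
            field_simp
  -- the bounded-ratio part
  have hB_le : ∫ x in Aᶜ, f₀ x * Real.log (f₀ x / f x) ∂μ ≤ (1 + 2*lam) * ε^2 := by
    have h1 : ∫ x in Aᶜ, f₀ x * Real.log (f₀ x / f x) ∂μ ≤ ∫ x in Aᶜ, φ x ∂μ :=
      setIntegral_mono_on hK.integrableOn hφ_int.integrableOn hAmeas.compl hBpt
    have hφA : 0 ≤ ∫ x in A, φ x ∂μ := by
      apply setIntegral_nonneg hAmeas
      intro x hx
      obtain ⟨hfx, hf₀x⟩ := hApos x hx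
      have h2 : Real.sqrt (f x) ≤ Real.sqrt (f₀ x) := by
        have h3 := hsA x hx
        nlinarith only [h3, hei, Real.sqrt_nonneg (f₀ x)]
      have hba : Real.sqrt (f x) * Real.sqrt (f₀ x) ≤ f₀ x := by
        calc Real.sqrt (f x) * Real.sqrt (f₀ x) ≤ Real.sqrt (f₀ x) * Real.sqrt (f₀ x) :=
              mul_le_mul_of_nonneg_right h2 (Real.sqrt_nonneg _)
          _ = f₀ x := Real.mul_self_sqrt (hf₀0 x)
      simp only [hφ_def]
      nlinarith only [hba, mul_nonneg (by linarith only [hlam2] : (0:ℝ) ≤ 2*lam)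
        (sq_nonneg (Real.sqrt (f₀ x) - Real.sqrt (f x)))]
    have h4 := integral_add_compl hAmeas hφ_int
    have h5 : (∫ x in Aᶜ, φ x ∂μ) ≤ (1 + 2*lam) * S := by
      rw [← hφ_integral]; linarith
    refine h1.trans (h5.trans ?_)
    exact mul_le_mul_of_nonneg_left hS_le (by linarith)
  -- the tail part
  set pA : ℝ := ∫ x in A, f₀ x ∂μ with hpA_def
  have hpA0 : 0 ≤ pA := setIntegral_nonneg hAmeas fun x _ => hf₀0 x
  have hpAc : c^2 * pA ≤ ε^2 := by
    have h1 : ∀ x ∈ A, c^2 * f₀ x ≤ (Real.sqrt (f₀ x) - Real.sqrt (f x))^2 := by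
      intro x hx
      obtain ⟨hfx, hf₀x⟩ := hApos x hx
      have h2 := hsA x hx
      have h3 : c * Real.sqrt (f₀ x) ≤ Real.sqrt (f₀ x) - Real.sqrt (f x) := by
        have h5 : Real.exp (-1) * Real.sqrt (f₀ x) = (1 - c) * Real.sqrt (f₀ x) := by
          rw [hc_def]; ring
        nlinarith only [h2, h5, Real.sqrt_nonneg (f₀ x)]
      have h4 : (c * Real.sqrt (f₀ x))^2 ≤ (Real.sqrt (f₀ x) - Real.sqrt (f x))^2 :=
        pow_le_pow_left₀ (by positivity) h3 2
      calc c^2 * f₀ x = (c * Real.sqrt (f₀ x))^2 := by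
            rw [mul_pow, Real.sq_sqrt (hf₀0 x)]
        _ ≤ _ := h4
    calc c^2 * pA = ∫ x in A, c^2 * f₀ x ∂μ := by
          rw [hpA_def, ← integral_const_mul]
      _ ≤ ∫ x in A, (Real.sqrt (f₀ x) - Real.sqrt (f x))^2 ∂μ :=
          setIntegral_mono_on ((hf₀_int.const_mul _).integrableOn) int_sq.integrableOn hAmeas h1
      _ ≤ S := by
          rw [hS_def]
          exact setIntegral_le_integral int_sq (Filter.Eventually.of_forall fun x => sq_nonneg _)
      _ ≤ ε^2 := hS_le
  set g : Ω → ℝ := fun x => f₀ x * (f₀ x / f x) ^ δ with hg_def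
  have hg0 : ∀ x, 0 ≤ g x := fun x =>
    mul_nonneg (hf₀0 x) (Real.rpow_nonneg (div_nonneg (hf₀0 x) (hf0 x)) δ)
  have hfinA : IntegrableOn g A μ := hfin.mono_set hsubset
  set m' : ℝ := ∫ x in A, g x ∂μ with hm'_def
  have hm'_le : m' ≤ Mδ^2 := by
    rw [hm'_def, hMδdef]
    exact setIntegral_mono_set hfin (Filter.Eventually.of_forall hg0)
      (HasSubset.Subset.eventuallyLE hsubset)
  have hepA : Real.exp 1 * pA ≤ m' := by
    rw [hpA_def, hm'_def, ← integral_const_mul]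
    apply setIntegral_mono_on ((hf₀_int.const_mul _).integrableOn) hfinA hAmeas
    intro x hx
    obtain ⟨hfx, hf₀x⟩ := hApos x hx
    simp only [hA_def, Set.mem_setOf_eq] at hx
    have h1 : Real.exp lam ^ δ ≤ (f₀ x / f x) ^ δ :=
      Real.rpow_le_rpow (Real.exp_pos lam).le hx hδ.le
    have h2 : Real.exp lam ^ δ = Real.exp (lam * δ) := (Real.exp_mul lam δ).symm
    have h3 : Real.exp 1 ≤ Real.exp (lam * δ) := by
      apply Real.exp_le_exp.mpr
      have h6 : lam * δ = 2*δ + 1 := by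
        rw [hlam_def]; field_simp
      rw [h6]; linarith only [hδ]
    have h4 : Real.exp 1 ≤ (f₀ x / f x) ^ δ := by
      calc Real.exp 1 ≤ Real.exp (lam*δ) := h3
        _ = Real.exp lam ^ δ := h2.symm
        _ ≤ _ := h1
    simp only [hg_def]
    calc Real.exp 1 * f₀ x = f₀ x * Real.exp 1 := by ring
      _ ≤ f₀ x * (f₀ x / f x)^δ := mul_le_mul_of_nonneg_left h4 (hf₀0 x)
  set TA : ℝ := (2*(ε^2/c^2)*M + ε^2*(10/27))/δ with hTA_def
  have hTA0 : 0 ≤ TA := by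
    rw [hTA_def]
    apply div_nonneg _ hδ.le
    have h1 : (0:ℝ) ≤ 2*(ε^2/c^2)*M := mul_nonneg (by positivity) (by linarith only [hM1])
    nlinarith only [h1, hε2]
  have hA_le : ∫ x in A, f₀ x * Real.log (f₀ x / f x) ∂μ ≤ TA := by
    rcases hpA0.eq_or_lt with hpA_eq | hpA_pos
    · have hzero : f₀ =ᵐ[μ.restrict A] 0 := by
        refine (integral_eq_zero_iff_of_nonneg (fun x => hf₀0 x) hf₀_int.integrableOn).mp ?_
        rw [← hpA_def]; exact hpA_eq.symm
      have hzint : ∫ x in A, f₀ x * Real.log (f₀ x / f x) ∂μ = 0 := by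
        have hae : (fun x => f₀ x * Real.log (f₀ x / f x))
            =ᵐ[μ.restrict A] (fun _ => (0:ℝ)) := by
          filter_upwards [hzero] with x hx
          rw [Pi.zero_apply] at hx
          rw [hx, zero_mul]
        rw [integral_congr_ae hae, integral_zero]
      rw [hzint]; exact hTA0
    · have hm'pos : 0 < m' := lt_of_lt_of_le (mul_pos (Real.exp_pos 1) hpA_pos) hepA
      set m : ℝ := m'/pA with hm_def
      have hmpos : 0 < m := div_pos hm'pos hpA_pos
      have hpt : ∀ x ∈ A, f₀ x * Real.log (f₀ x / f x)
          ≤ (f₀ x * Real.log m + g x / m - f₀ x)/δ := by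
        intro x hx
        obtain ⟨hfx, hf₀x⟩ := hApos x hx
        have hrpos : 0 < f₀ x / f x := div_pos hf₀x hfx
        have hy : 0 < (f₀ x / f x)^δ := Real.rpow_pos_of_pos hrpos δ
        have h1 : Real.log ((f₀ x / f x)^δ / m) ≤ (f₀ x / f x)^δ / m - 1 :=
          Real.log_le_sub_one_of_pos (div_pos hy hmpos)
        have h2 : Real.log ((f₀ x / f x)^δ / m)
            = δ * Real.log (f₀ x / f x) - Real.log m := by
          rw [Real.log_div hy.ne' hmpos.ne', Real.log_rpow hrpos]
        rw [h2] at h1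
        rw [le_div_iff₀ hδ]
        simp only [hg_def]
        generalize hyv : (f₀ x / f x) ^ δ = y at h1 ⊢
        have h8 := mul_le_mul_of_nonneg_left h1 (hf₀0 x)
        have h9 : f₀ x * (δ * Real.log (f₀ x / f x) - Real.log m)
            = f₀ x * Real.log (f₀ x / f x) * δ - f₀ x * Real.log m := by ring
        have h10 : f₀ x * (y / m - 1) = f₀ x * y / m - f₀ x := by ring
        linarith only [h8, h9, h10]
      have hIA : ∫ x in A, f₀ x * Real.log (f₀ x / f x) ∂μ
          ≤ (pA * Real.log m + m'/m - pA)/δ := by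
        have i3 : IntegrableOn (fun x => f₀ x * Real.log m) A μ :=
          hf₀_int.integrableOn.mul_const _
        have i4 : IntegrableOn (fun x => g x / m) A μ := hfinA.div_const _
        have i34 : IntegrableOn (fun x => f₀ x * Real.log m + g x / m) A μ := i3.add i4
        have hint : IntegrableOn (fun x => (f₀ x * Real.log m + g x / m - f₀ x)/δ) A μ :=
          ((i34.sub hf₀_int.integrableOn).div_const _)
        refine (setIntegral_mono_on hK.integrableOn hint hAmeas hpt).trans (le_of_eq ?_)
        rw [integral_div]
        congr 1
        rw [integral_sub i34 hf₀_int.integrableOn, integral_add i3 i4,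
          integral_mul_const, integral_div, ← hpA_def, ← hm'_def]
      have hmm' : m'/m = pA := by
        rw [hm_def]; field_simp
      have hstep : ∫ x in A, f₀ x * Real.log (f₀ x / f x) ∂μ ≤ (pA * Real.log m)/δ := by
        refine hIA.trans (le_of_eq ?_)
        rw [hmm']; ring
      refine hstep.trans ?_
      have hlogm_le : Real.log m ≤ Real.log (Mδ^2 / pA) := by
        apply Real.log_le_log hmpos
        rw [hm_def]
        exact (div_le_div_iff_of_pos_right hpA_pos).mpr hm'_le
      have hsplit : Real.log (Mδ^2/pA) = 2*Real.log (Mδ/ε) + Real.log (ε^2/pA) := by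
        rw [Real.log_div (pow_ne_zero 2 hMδ.ne') hpA_pos.ne',
            Real.log_div (pow_ne_zero 2 hε.ne') hpA_pos.ne',
            Real.log_div hMδ.ne' hε.ne', Real.log_pow, Real.log_pow]
        push_cast; ring
      have hb1 : pA * (2*Real.log (Mδ/ε)) ≤ 2*(ε^2/c^2)*M := by
        rcases le_or_gt (Real.log (Mδ/ε)) 0 with hL | hL
        · have hh1 : pA * (2*Real.log (Mδ/ε)) ≤ 0 := by
            nlinarith only [mul_nonneg hpA0
              (by linarith only [hL] : (0:ℝ) ≤ -(2*Real.log (Mδ/ε)))]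
          have hh2 : (0:ℝ) ≤ 2*(ε^2/c^2)*M := mul_nonneg (by positivity)
            (by linarith only [hM1])
          linarith only [hh1, hh2]
        · have hLM : Real.log (Mδ/ε) ≤ M := le_max_right _ _
          have hpA_le : pA ≤ ε^2/c^2 := by
            rw [le_div_iff₀ (by positivity : (0:ℝ) < c^2)]
            nlinarith only [hpAc]
          nlinarith only [mul_nonneg (sub_nonneg.mpr hpA_le)
              (by linarith only [hL] : (0:ℝ) ≤ 2*Real.log (Mδ/ε)),
            mul_nonneg (sub_nonneg.mpr hLM) (by positivity : (0:ℝ) ≤ 2*(ε^2/c^2))]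
      have hb2 : pA * Real.log (ε^2/pA) ≤ ε^2 * (10/27) := by
        have hu : 0 < ε^2/pA := by positivity
        have h1 : Real.log (ε^2/pA) ≤ (ε^2/pA) * (10/27) := by
          have h2 : Real.log (ε^2/pA) = Real.log ((ε^2/pA)/Real.exp 1) + 1 := by
            rw [Real.log_div hu.ne' (Real.exp_ne_zero 1), Real.log_exp]; ring
          have h3 : Real.log ((ε^2/pA)/Real.exp 1) ≤ (ε^2/pA)/Real.exp 1 - 1 :=
            Real.log_le_sub_one_of_pos (by positivity)
          have h4 : (ε^2/pA)/Real.exp 1 ≤ (ε^2/pA)*(10/27) := by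
            rw [div_eq_mul_inv]
            apply mul_le_mul_of_nonneg_left _ hu.le
            rw [← Real.exp_neg]; linarith only [hei]
          linarith only [h2, h3, h4]
        calc pA * Real.log (ε^2/pA) ≤ pA * ((ε^2/pA)*(10/27)) :=
              mul_le_mul_of_nonneg_left h1 hpA0
          _ = ε^2 * (10/27) := by field_simp
      have hfinal : pA * Real.log m ≤ 2*(ε^2/c^2)*M + ε^2*(10/27) := by
        have h5 : pA * Real.log m ≤ pA * Real.log (Mδ^2/pA) :=
          mul_le_mul_of_nonneg_left hlogm_le hpA0
        rw [hsplit] at h5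
        nlinarith only [h5, hb1, hb2]
      rw [hTA_def]
      exact (div_le_div_iff_of_pos_right hδ).mpr hfinal
  -- combine the two parts
  have hsplit_int := integral_add_compl hAmeas hK
  have htotal : ∫ x, f₀ x * Real.log (f₀ x / f x) ∂μ ≤ (1+2*lam)*ε^2 + TA := by
    linarith only [hA_le, hB_le, hsplit_int]
  refine htotal.trans ?_
  -- final numeric comparison
  have hc2' : (289:ℝ)/729 < c^2 := by nlinarith only [hcpos, hc0]
  have hd0 : (0:ℝ) < 1/δ := by positivity
  have hd1 : (1:ℝ) ≤ 1/δ := by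
    rw [le_div_iff₀ hδ]; nlinarith only [hδ1]
  have hC : (0:ℝ) < (c^2)⁻¹ := by positivity
  have hcc' : ε^2 * (c^2)⁻¹ ≤ ε^2 * (729/289) := by
    rw [← div_eq_mul_inv, div_le_iff₀ (by positivity : (0:ℝ) < c^2)]
    nlinarith only [mul_nonneg hε2.le (sub_nonneg.mpr hc2'.le)]
  rw [one_div] at hd0 hd1
  rw [hTA_def, hlam_def]
  simp only [div_eq_mul_inv, one_div]
  nlinarith only [mul_le_mul_of_nonneg_right hcc'
      (mul_nonneg (by linarith only [hM1] : (0:ℝ) ≤ M) hd0.le),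
    mul_nonneg (mul_nonneg hd0.le hε2.le) (sub_nonneg.mpr hM1),
    mul_nonneg (mul_nonneg hlog2 hC.le) hε2.le,
    mul_nonneg hd0.le hε2.le, hε2, hd1, hd0, hM1]
end

section
/- Let r > 0, A₁ > 0, and N₁ = n^{1/(2r+1)} (log n)^{−1/r}. Then as n → ∞, the sum Σ_{I=1}^{N₁−1} exp(−2A₁ n I^{−2r}) is asymptotically of order (1/(4rA₁ (log n)^{1/r+2})) exp(−2A₁ n^{1/(2r+1)} (log n)²); in particular it is bounded above by a constant times (log n)^{−2−1/r} exp(−2A₁ n^{1/(2r+1)} (log n)²) for large n. -/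
set_option maxHeartbeats 1000000


open Finset Filter

/-- Bernoulli-type inequality: `(1-x)^{-p} ≥ 1 + p x` for `0 < x < 1`, `p ≥ 0`. -/
lemma one_add_mul_le_rpow_neg {x p : ℝ} (hx0 : 0 < x) (hx1 : x < 1) (hp : 0 ≤ p) :
    1 + p * x ≤ (1 - x) ^ (-p) := by
  have h1 : (0:ℝ) < 1 - x := by linarith
  rw [Real.rpow_def_of_pos h1]
  have hlog : Real.log (1 - x) ≤ -x := by
    have := Real.log_le_sub_one_of_pos h1; linarith
  have h2 : p * x ≤ Real.log (1 - x) * (-p) := by nlinarith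
  have h3 : p * x + 1 ≤ Real.exp (p * x) := Real.add_one_le_exp _
  have h4 : Real.exp (p * x) ≤ Real.exp (Real.log (1 - x) * (-p)) := Real.exp_le_exp.mpr h2
  linarith

/-- with `N₁ = n^{1/(2r+1)} (log n)^{-1/r}`, the sum
`∑_{I=1}^{N₁-1} exp(-2A₁ n I^{-2r})` is, for large `n`, bounded by a constant times
`(log n)^{-2-1/r} exp(-2A₁ n^{1/(2r+1)} (log n)²)`. -/
theorem small_partition_sum_bound (r A₁ : ℝ) (hr : 0 < r) (hA₁ : 0 < A₁) :
    ∃ C : ℝ, 0 < C ∧ ∀ᶠ n : ℕ in atTop,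
      ∑ I ∈ Finset.Icc 1
          (Nat.floor ((n : ℝ) ^ ((1 : ℝ) / (2 * r + 1)) * (Real.log n) ^ (-(1 : ℝ) / r)) - 1),
        Real.exp (-2 * A₁ * n * (I : ℝ) ^ (-(2 * r)))
      ≤ C * (Real.log n) ^ (-(2 : ℝ) - 1 / r) *
          Real.exp (-2 * A₁ * (n : ℝ) ^ ((1 : ℝ) / (2 * r + 1)) * (Real.log n) ^ 2) := by
  refine ⟨1, one_pos, ?_⟩
  have hr1 : (0:ℝ) < 2 * r + 1 := by linarith
  have htL : Tendsto (fun n : ℕ => Real.log n) atTop atTop :=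
    Real.tendsto_log_atTop.comp tendsto_natCast_atTop_atTop
  have hev := htL.eventually_ge_atTop
    (max (max 1 ((3 + 1/r) / (4 * A₁ * r))) (((2*r+1) * (1 + 2/r))^2))
  filter_upwards [hev, eventually_ge_atTop 1] with n hK hn1
  set L := Real.log n with hLdef
  have hL1 : (1:ℝ) ≤ L := le_trans (le_trans (le_max_left _ _) (le_max_left _ _)) hK
  have hLc : (3 + 1/r) / (4 * A₁ * r) ≤ L :=
    le_trans (le_trans (le_max_right _ _) (le_max_left _ _)) hK
  have hLs : ((2*r+1) * (1 + 2/r))^2 ≤ L := le_trans (le_max_right _ _) hK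
  have hLpos : (0:ℝ) < L := by linarith
  have hnpos : (0:ℝ) < (n:ℝ) := by exact_mod_cast Nat.lt_of_lt_of_le Nat.zero_lt_one hn1
  have hn1' : (1:ℝ) ≤ (n:ℝ) := by exact_mod_cast hn1
  have hexpL : Real.exp L = (n:ℝ) := Real.exp_log hnpos
  set B := (n:ℝ) ^ ((1:ℝ) / (2 * r + 1)) with hB
  have hBpos : 0 < B := Real.rpow_pos_of_pos hnpos _
  set N₁ := B * L ^ (-(1:ℝ) / r) with hN1def
  clear_value N₁
  -- N₁ ≥ 2
  have hs1' : (1:ℝ) ≤ (2*r+1) * (1 + 2/r) := by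
    have h2r : (0:ℝ) < 2/r := by positivity
    nlinarith
  have hsqrt : (2*r+1) * (1 + 2/r) ≤ Real.sqrt L := by
    rw [Real.le_sqrt (by linarith) hLpos.le]
    exact hLs
  set s := Real.sqrt L with hsdef
  have hss : s * s = L := Real.mul_self_sqrt hLpos.le
  have hs1 : (1:ℝ) ≤ s := le_trans hs1' hsqrt
  have hlogL : Real.log L ≤ 2 * (s - 1) := by
    have h1 : Real.log s = Real.log L / 2 := Real.log_sqrt hLpos.le
    have h2 : Real.log s ≤ s - 1 := by
      have := Real.log_le_sub_one_of_pos (by linarith : (0:ℝ) < s); linarith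
    linarith
  have hsqrt' : (2*r+1) * (r + 2) ≤ r * s := by
    have h := mul_le_mul_of_nonneg_left hsqrt hr.le
    have he : r * ((2*r+1) * (1 + 2/r)) = (2*r+1) * (r + 2) := by
      field_simp
    linarith [he ▸ h]
  have key : r * (2*r+1) + 2 * (s - 1) * (2*r+1) ≤ r * (s * s) := by
    nlinarith [mul_le_mul_of_nonneg_left hsqrt' (by linarith : (0:ℝ) ≤ s),
      mul_nonneg (mul_nonneg hr.le (by linarith : (0:ℝ) ≤ s - 1)) (by linarith : (0:ℝ) ≤ 2*r+1)]
  have hN1exp : N₁ = Real.exp (L / (2*r+1) - Real.log L / r) := by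
    rw [hN1def, hB, Real.rpow_def_of_pos hnpos, Real.rpow_def_of_pos hLpos, ← Real.exp_add,
      ← hLdef]
    congr 1
    ring
  have hN1_2 : (2:ℝ) ≤ N₁ := by
    have hlog2 : Real.log 2 ≤ 1 := by
      have := Real.log_le_sub_one_of_pos (by norm_num : (0:ℝ) < 2); linarith
    have e1 : Real.log L / r ≤ 2 * (s - 1) / r := by gcongr
    have e2 : 1 + 2 * (s - 1) / r ≤ L / (2*r+1) := by
      rw [le_div_iff₀ hr1, ← hss]
      have he : (1 + 2*(s-1)/r) * (2*r+1) = (r*(2*r+1) + 2*(s-1)*(2*r+1)) / r := by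
        field_simp
      rw [he, div_le_iff₀ hr]
      nlinarith [key]
    have hgoal : Real.log 2 ≤ L / (2*r+1) - Real.log L / r := by linarith
    calc (2:ℝ) = Real.exp (Real.log 2) := (Real.exp_log two_pos).symm
      _ ≤ Real.exp (L / (2*r+1) - Real.log L / r) := Real.exp_le_exp.mpr hgoal
      _ = N₁ := hN1exp.symm
  -- floor and M
  have hNfloor : 2 ≤ Nat.floor N₁ := Nat.le_floor (by exact_mod_cast hN1_2)
  set M := Nat.floor N₁ - 1 with hMdef
  have hM1 : 1 ≤ M := by omega
  have hMcast : (M:ℝ) = (Nat.floor N₁ : ℝ) - 1 := by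
    rw [hMdef, Nat.cast_sub (by omega)]; norm_num
  have hN1pos : (0:ℝ) < N₁ := by linarith
  have hMle : (M:ℝ) ≤ N₁ - 1 := by
    rw [hMcast]
    have := Nat.floor_le hN1pos.le
    linarith
  have hMr1 : (1:ℝ) ≤ (M:ℝ) := by exact_mod_cast hM1
  -- key computations
  set T := L ^ ((2:ℝ) + 1/r) with hTdef
  have hTpos : 0 < T := Real.rpow_pos_of_pos hLpos _
  have hL2 : L ^ (2:ℝ) = L ^ 2 := by
    rw [show (2:ℝ) = ((2:ℕ):ℝ) by norm_num, Real.rpow_natCast]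
  have hC : (n:ℝ) * N₁ ^ (-(2*r)) = B * L ^ (2:ℝ) := by
    have h1 : N₁ ^ (-(2*r)) = B ^ (-(2*r)) * L ^ (2:ℝ) := by
      rw [hN1def, Real.mul_rpow hBpos.le (Real.rpow_nonneg hLpos.le _),
        ← Real.rpow_mul hLpos.le]
      congr 1
      field_simp
    have h2 : (n:ℝ) * B ^ (-(2*r)) = B := by
      rw [hB, ← Real.rpow_mul hnpos.le]
      nth_rewrite 1 [← Real.rpow_one (n:ℝ)]
      rw [← Real.rpow_add hnpos]
      congr 1
      field_simp
      ring
    rw [h1, ← mul_assoc, h2]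
  have hT : B * L ^ (2:ℝ) / N₁ = T := by
    rw [hN1def, mul_div_mul_left _ _ hBpos.ne', ← Real.rpow_sub hLpos]
    congr 1
    ring
  have hkey : B * L ^ 2 + 2 * r * T ≤ (n:ℝ) * (M:ℝ) ^ (-(2*r)) := by
    have hMpos : (0:ℝ) < (M:ℝ) := by linarith
    have stepA : (N₁ - 1) ^ (-(2*r)) ≤ (M:ℝ) ^ (-(2*r)) :=
      Real.rpow_le_rpow_of_nonpos hMpos hMle (by linarith)
    have hinv1 : (0:ℝ) < 1 / N₁ := by positivity
    have hinv2 : 1 / N₁ < 1 := by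
      rw [div_lt_one hN1pos]; linarith
    have hbern : 1 + (2*r) * (1/N₁) ≤ (1 - 1/N₁) ^ (-(2*r)) :=
      one_add_mul_le_rpow_neg hinv1 hinv2 (by linarith)
    have hfac : N₁ - 1 = N₁ * (1 - 1/N₁) := by
      field_simp
    have stepB : N₁ ^ (-(2*r)) * (1 + 2*r * (1/N₁)) ≤ (N₁ - 1) ^ (-(2*r)) := by
      rw [hfac, Real.mul_rpow hN1pos.le (by linarith : (0:ℝ) ≤ 1 - 1/N₁)]
      exact mul_le_mul_of_nonneg_left hbern (Real.rpow_nonneg hN1pos.le (-(2*r)))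
    have expand : (n:ℝ) * (N₁ ^ (-(2*r)) * (1 + 2*r * (1/N₁)))
        = B * L ^ (2:ℝ) + 2*r * (B * L ^ (2:ℝ) / N₁) := by
      have h : (n:ℝ) * (N₁ ^ (-(2*r)) * (1 + 2*r * (1/N₁)))
          = ((n:ℝ) * N₁ ^ (-(2*r))) + 2*r * (((n:ℝ) * N₁ ^ (-(2*r))) / N₁) := by
        ring
      rw [h, hC]
    have chain : B * L ^ (2:ℝ) + 2*r*T ≤ (n:ℝ) * (M:ℝ) ^ (-(2*r)) := by
      calc B * L ^ (2:ℝ) + 2*r*T = (n:ℝ) * (N₁ ^ (-(2*r)) * (1 + 2*r * (1/N₁))) := by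
            rw [expand, hT]
        _ ≤ (n:ℝ) * (N₁ - 1) ^ (-(2*r)) := mul_le_mul_of_nonneg_left stepB hnpos.le
        _ ≤ (n:ℝ) * (M:ℝ) ^ (-(2*r)) := mul_le_mul_of_nonneg_left stepA hnpos.le
    rw [hL2] at chain
    exact chain
  -- sum bound
  have hsum : ∑ I ∈ Finset.Icc 1 M, Real.exp (-2 * A₁ * n * (I:ℝ) ^ (-(2*r)))
      ≤ (M:ℝ) * Real.exp (-2 * A₁ * (n:ℝ) * (M:ℝ) ^ (-(2*r))) := by
    have hb : ∀ I ∈ Finset.Icc 1 M,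
        Real.exp (-2 * A₁ * n * (I:ℝ) ^ (-(2*r)))
          ≤ Real.exp (-2 * A₁ * (n:ℝ) * (M:ℝ) ^ (-(2*r))) := by
      intro I hI
      rw [Finset.mem_Icc] at hI
      apply Real.exp_le_exp.mpr
      have hIpos : (0:ℝ) < (I:ℝ) := by exact_mod_cast hI.1
      have hIM : (I:ℝ) ≤ (M:ℝ) := by exact_mod_cast hI.2
      have h := Real.rpow_le_rpow_of_nonpos hIpos hIM (by linarith : -(2*r) ≤ 0)
      nlinarith [mul_le_mul_of_nonneg_left h (by positivity : (0:ℝ) ≤ 2 * A₁ * (n:ℝ))]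
    calc ∑ I ∈ Finset.Icc 1 M, Real.exp (-2 * A₁ * n * (I:ℝ) ^ (-(2*r)))
        ≤ (Finset.Icc 1 M).card • Real.exp (-2 * A₁ * (n:ℝ) * (M:ℝ) ^ (-(2*r))) :=
          Finset.sum_le_card_nsmul _ _ _ hb
      _ = (M:ℝ) * Real.exp (-2 * A₁ * (n:ℝ) * (M:ℝ) ^ (-(2*r))) := by
          rw [Nat.card_Icc, nsmul_eq_mul]
          norm_num
  -- exponential splitting
  have hexp_split : Real.exp (-2 * A₁ * (n:ℝ) * (M:ℝ) ^ (-(2*r)))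
      ≤ Real.exp (-(4 * A₁ * r * T)) * Real.exp (-2 * A₁ * B * L ^ 2) := by
    rw [← Real.exp_add]
    apply Real.exp_le_exp.mpr
    nlinarith [mul_le_mul_of_nonneg_left hkey (by positivity : (0:ℝ) ≤ 2 * A₁)]
  -- M * T ≤ exp (4 A₁ r T)
  have hMT : (M:ℝ) * T ≤ Real.exp (4 * A₁ * r * T) := by
    have hMn : (M:ℝ) ≤ Real.exp L := by
      have h1 : L ^ (-(1:ℝ)/r) ≤ 1 := by
        apply Real.rpow_le_one_of_one_le_of_nonpos hL1
        have : (0:ℝ) ≤ 1/r := by positivity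
        rw [neg_div]
        linarith
      have hN1B : N₁ ≤ B := by
        rw [hN1def]
        exact mul_le_of_le_one_right hBpos.le h1
      have hBn : B ≤ (n:ℝ) := by
        rw [hB]
        nth_rewrite 2 [← Real.rpow_one (n:ℝ)]
        apply Real.rpow_le_rpow_of_exponent_le hn1'
        rw [div_le_one hr1]
        linarith
      rw [hexpL]
      linarith
    have hTexp : T ≤ Real.exp (L * ((2:ℝ) + 1/r)) := by
      have hLe : L ≤ Real.exp L := by linarith [Real.add_one_le_exp L]
      calc T ≤ (Real.exp L) ^ ((2:ℝ) + 1/r) :=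
            Real.rpow_le_rpow hLpos.le hLe (by positivity)
        _ = Real.exp (L * ((2:ℝ) + 1/r)) := (Real.exp_mul L _).symm
    have hTge : L * L ≤ T := by
      have h := Real.rpow_le_rpow_of_exponent_le hL1
        (show (2:ℝ) ≤ (2:ℝ) + 1/r from le_add_of_nonneg_right (by positivity))
      rw [hL2] at h
      nlinarith [h]
    have h4 : (0:ℝ) < 4 * A₁ * r := by positivity
    have h5 : 3 + 1/r ≤ L * (4 * A₁ * r) := (div_le_iff₀ h4).mp hLc
    have harg : L + L * ((2:ℝ) + 1/r) ≤ 4 * A₁ * r * T := by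
      nlinarith [mul_le_mul_of_nonneg_left h5 hLpos.le,
        mul_le_mul_of_nonneg_left hTge h4.le]
    calc (M:ℝ) * T ≤ Real.exp L * Real.exp (L * ((2:ℝ) + 1/r)) :=
          mul_le_mul hMn hTexp hTpos.le (Real.exp_pos L).le
      _ = Real.exp (L + L * ((2:ℝ) + 1/r)) := (Real.exp_add _ _).symm
      _ ≤ Real.exp (4 * A₁ * r * T) := Real.exp_le_exp.mpr harg
  -- conclusion
  have hinvT : L ^ (-(2:ℝ) - 1/r) = T⁻¹ := by
    rw [show (-(2:ℝ) - 1/r) = -((2:ℝ) + 1/r) by ring, Real.rpow_neg hLpos.le]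
  have hMexp : (M:ℝ) * Real.exp (-(4 * A₁ * r * T)) ≤ T⁻¹ := by
    have h2 : (M:ℝ) ≤ Real.exp (4 * A₁ * r * T) / T := (le_div_iff₀ hTpos).mpr hMT
    calc (M:ℝ) * Real.exp (-(4 * A₁ * r * T))
        ≤ (Real.exp (4 * A₁ * r * T) / T) * Real.exp (-(4 * A₁ * r * T)) :=
          mul_le_mul_of_nonneg_right h2 (Real.exp_pos _).le
      _ = T⁻¹ := by
          rw [Real.exp_neg]
          field_simp
  rw [one_mul, hinvT]
  calc ∑ I ∈ Finset.Icc 1 M, Real.exp (-2 * A₁ * n * (I:ℝ) ^ (-(2*r)))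
      ≤ (M:ℝ) * Real.exp (-2 * A₁ * (n:ℝ) * (M:ℝ) ^ (-(2*r))) := hsum
    _ ≤ (M:ℝ) * (Real.exp (-(4 * A₁ * r * T)) * Real.exp (-2 * A₁ * B * L ^ 2)) :=
        mul_le_mul_of_nonneg_left hexp_split (by linarith)
    _ = ((M:ℝ) * Real.exp (-(4 * A₁ * r * T))) * Real.exp (-2 * A₁ * B * L ^ 2) := by ring
    _ ≤ T⁻¹ * Real.exp (-2 * A₁ * B * L ^ 2) :=
        mul_le_mul_of_nonneg_right hMexp (Real.exp_pos _).le
end
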